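/- Suppose the value function g satisfies the diminishing returns property and has curvature at most α for some α ∈ [0,1). Then for every nonempty S ⊆ {1,…,n}, u(S) ≤ (d(S)/(1−α))·v(S), where v(S) = (Σ_{i∈S} r_i/k_i) / (Σ_{i∈S} 1/k_i) is the average score of S. -/

import Mathlib

open MeasureTheory ProbabilityTheory Finset

/-- Monotonicity of a value function on multisets of nonnegative reals. -/
def ValMonotone (g : Multiset NNReal → ℝ) : Prop :=
  ∀ ⦃s t : Multiset NNReal⦄, s ≤ t → g s ≤ g t

/-- The diminishing returns property of a value function. -/
def DiminishingReturns (g : Multiset NNReal → ℝ) : Prop :=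
  ∀ ⦃s t : Multiset NNReal⦄, s ≤ t → ∀ z : NNReal, g (z ::ₘ t) - g t ≤ g (z ::ₘ s) - g s

/-- The extended diminishing returns property of a value function. -/
def ExtendedDiminishingReturns (g : Multiset NNReal → ℝ) : Prop :=
  DiminishingReturns g ∧
    ∀ v : ℝ, (∃ s : Multiset NNReal, g s = v) →
      ∃ y : Multiset NNReal, g y = v ∧
        ∀ x : Multiset NNReal, g x ≤ v → ∀ z : NNReal, g (z ::ₘ y) - g y ≤ g (z ::ₘ x) - g x

/-- Continuity of a value function on multisets of each fixed size. -/
def ValContinuous (g : Multiset NNReal → ℝ) : Prop :=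
  ∀ m : ℕ, Continuous fun x : Fin m → NNReal => g (List.ofFn x)

/-- The value function `g` has curvature at most `α`. -/
def CurvatureLE (g : Multiset NNReal → ℝ) (α : ℝ) : Prop :=
  ∀ ⦃s t : Multiset NNReal⦄, s ≤ t → ∀ z : NNReal,
    (1 - α) * (g (z ::ₘ s) - g s) ≤ g (z ::ₘ t) - g t

/-- The stochastic utility of a set of items: `u(S) = E[g({X_i : i ∈ S})]`. -/
noncomputable def utility {Ω : Type} [MeasurableSpace Ω] (μ : Measure Ω) {n : ℕ}
    (g : Multiset NNReal → ℝ) (X : Fin n → Ω → NNReal) (S : Finset (Fin n)) : ℝ :=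
  ∫ ω, g (Multiset.map (fun i => X i ω) S.val) ∂μ

/-- The replication test score of item `i`: expected value of `g` on `k i` i.i.d. copies. -/
noncomputable def testScore {n : ℕ} (g : Multiset NNReal → ℝ)
    (P : Fin n → Measure NNReal) (k : Fin n → ℕ) (i : Fin n) : ℝ :=
  ∫ x : Fin (k i) → NNReal, g (List.ofFn x) ∂(Measure.pi fun _ => P i)

/-- The relative cost `d(S) = ∑_{i ∈ S} 1 / k_i`. -/
noncomputable def relCost {n : ℕ} (k : Fin n → ℕ) (S : Finset (Fin n)) : ℝ :=
  ∑ i ∈ S, ((k i : ℝ))⁻¹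

private lemma stmt14_subadd {g : Multiset NNReal → ℝ} (hg0 : g 0 = 0) (hdr : DiminishingReturns g) :
    ∀ m : Multiset NNReal, g m ≤ (m.map fun z => g {z}).sum := by
  intro m
  induction m using Multiset.induction_on with
  | empty => simp [hg0]
  | cons z m ih =>
    have h := hdr (Multiset.zero_le m) z
    simp only [Multiset.cons_zero, hg0, sub_zero] at h
    rw [Multiset.map_cons, Multiset.sum_cons]
    linarith

private lemma stmt14_curvsum {g : Multiset NNReal → ℝ} {α : ℝ} (hg0 : g 0 = 0)
    (hcurv : CurvatureLE g α) :
    ∀ m : Multiset NNReal, (1 - α) * (m.map fun z => g {z}).sum ≤ g m := by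
  intro m
  induction m using Multiset.induction_on with
  | empty => simp [hg0]
  | cons z m ih =>
    have h := hcurv (Multiset.zero_le m) z
    simp only [Multiset.cons_zero, hg0, sub_zero] at h
    rw [Multiset.map_cons, Multiset.sum_cons, mul_add]
    linarith

private lemma stmt14_measurePreserving_eval {m : ℕ} {Ω : Type*} [MeasurableSpace Ω] (μ : Measure Ω)
    [IsProbabilityMeasure μ] (j : Fin m) :
    MeasurePreserving (fun ω : Fin m → Ω => ω j) (Measure.pi fun _ => μ) μ := by
  refine ⟨measurable_pi_apply j, ?_⟩
  ext s hs
  rw [Measure.map_apply (measurable_pi_apply j) hs,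
    show (fun ω : Fin m → Ω => ω j) ⁻¹' s
        = Set.pi Set.univ (Function.update (fun _ => Set.univ) j s) from Set.eval_preimage,
    Measure.pi_pi]
  simp only [Function.apply_update (fun _ t => μ t)]
  rw [Finset.prod_update_of_mem (Finset.mem_univ j)]
  simp

/-- upper bound on the utility via the average score and curvature:
`u(S) ≤ (d(S)/(1−α)) · v(S)`. -/
theorem stmt14 {Ω : Type} [MeasurableSpace Ω] (μ : Measure Ω) [IsProbabilityMeasure μ]
    {n : ℕ} (hn : 1 ≤ n)
    (c : Fin n → ℝ) (B : ℝ) (hB : 0 < B) (hc : ∀ i, 0 < c i) (hcB : ∀ i, c i ≤ B)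
    (k : Fin n → ℕ) (hk : ∀ i, k i = ⌊B / c i⌋₊)
    (X : Fin n → Ω → NNReal) (hXmeas : ∀ i, Measurable (X i))
    (P : Fin n → Measure NNReal) [∀ i, IsProbabilityMeasure (P i)]
    (hlaw : ∀ i, μ.map (X i) = P i)
    (hindep : iIndepFun X μ)
    (g : Multiset NNReal → ℝ) (hg0 : g 0 = 0) (hgnn : ∀ s, 0 ≤ g s)
    (hdr : DiminishingReturns g)
    (α : ℝ) (hα0 : 0 ≤ α) (hα1 : α < 1) (hcurv : CurvatureLE g α)
    (hIntu : ∀ S : Finset (Fin n),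
      Integrable (fun ω => g (Multiset.map (fun i => X i ω) S.val)) μ)
    (hIntr : ∀ i, Integrable (fun x : Fin (k i) → NNReal => g (List.ofFn x))
      (Measure.pi fun _ => P i))
    (S : Finset (Fin n)) (hS : S.Nonempty) :
    utility μ g X S ≤
      (relCost k S / (1 - α)) *
        ((∑ i ∈ S, testScore g P k i / (k i : ℝ)) / ∑ i ∈ S, ((k i : ℝ))⁻¹) := by

  have hα : (0:ℝ) < 1 - α := by linarith
  have hk1 : ∀ i, 1 ≤ k i := by
    intro i
    rw [hk i]
    exact Nat.le_floor (by push_cast; exact (one_le_div (hc i)).2 (hcB i))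
  have hkpos : ∀ i, (0:ℝ) < (k i : ℝ) := fun i => by exact_mod_cast hk1 i
  have hInt1 : ∀ i : Fin n, Integrable (fun ω => g {X i ω}) μ := by
    intro i
    simpa using hIntu {i}
  -- Step A: subadditivity
  have stepA : utility μ g X S ≤ ∑ i ∈ S, ∫ ω, g {X i ω} ∂μ := by
    have h1 : utility μ g X S ≤ ∫ ω, (∑ i ∈ S, g {X i ω}) ∂μ := by
      refine integral_mono (hIntu S) (integrable_finset_sum S fun i _ => hInt1 i) fun ω => ?_
      have h := stmt14_subadd hg0 hdr (Multiset.map (fun i => X i ω) S.val)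
      rw [Multiset.map_map] at h
      simpa [Function.comp] using h
    rwa [integral_finset_sum S (fun i _ => hInt1 i)] at h1
  -- Step B: curvature bound on each test score
  have stepB : ∀ i : Fin n,
      (1 - α) * ((k i : ℝ) * ∫ ω, g {X i ω} ∂μ) ≤ testScore g P k i := by
    intro i
    have hXm : MeasurePreserving (fun (ω : Fin (k i) → Ω) (j : Fin (k i)) => X i (ω j))
        (Measure.pi fun _ => μ) (Measure.pi fun _ => P i) :=
      measurePreserving_pi _ _ (fun _ => ⟨hXmeas i, hlaw i⟩)
    have hts : testScore g P k i
        = ∫ ω : Fin (k i) → Ω, g (List.ofFn fun j => X i (ω j)) ∂(Measure.pi fun _ => μ) := by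
      rw [testScore, ← hXm.map_eq,
        integral_map hXm.measurable.aemeasurable
          (by rw [hXm.map_eq]; exact (hIntr i).aestronglyMeasurable)]
    have hIntG : Integrable (fun ω : Fin (k i) → Ω => g (List.ofFn fun j => X i (ω j)))
        (Measure.pi fun _ => μ) :=
      (hXm.integrable_comp (hIntr i).aestronglyMeasurable).2 (hIntr i)
    have hev : ∀ j : Fin (k i), MeasurePreserving (fun ω : Fin (k i) → Ω => ω j)
        (Measure.pi fun _ => μ) μ := fun j => stmt14_measurePreserving_eval μ j
    have hIntj : ∀ j : Fin (k i),
        Integrable (fun ω : Fin (k i) → Ω => g {X i (ω j)}) (Measure.pi fun _ => μ) :=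
      fun j => ((hev j).integrable_comp (hInt1 i).aestronglyMeasurable).2 (hInt1 i)
    have hj : ∀ j : Fin (k i),
        (∫ ω : Fin (k i) → Ω, g {X i (ω j)} ∂(Measure.pi fun _ => μ)) = ∫ ω, g {X i ω} ∂μ := by
      intro j
      have h2 := integral_map (f := fun x : Ω => g {X i x}) (hev j).measurable.aemeasurable
        (by rw [(hev j).map_eq]; exact (hInt1 i).aestronglyMeasurable)
      rw [(hev j).map_eq] at h2
      exact h2.symm
    have hpt : ∀ ω : Fin (k i) → Ω,
        (1 - α) * ∑ j : Fin (k i), g {X i (ω j)} ≤ g (List.ofFn fun j => X i (ω j)) := by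
      intro ω
      have h := stmt14_curvsum hg0 hcurv (↑(List.ofFn fun j => X i (ω j)))
      simpa [Multiset.map_coe, Multiset.sum_coe, List.map_ofFn, List.sum_ofFn,
        Function.comp] using h
    have key : (1 - α) * ∫ ω : Fin (k i) → Ω, (∑ j : Fin (k i), g {X i (ω j)})
          ∂(Measure.pi fun _ => μ) ≤ testScore g P k i := by
      rw [hts, ← integral_const_mul]
      exact integral_mono
        ((integrable_finset_sum _ fun j _ => hIntj j).const_mul _) hIntG hpt
    rw [integral_finset_sum _ (fun j _ => hIntj j)] at key
    simp only [hj, Finset.sum_const, Finset.card_univ, Fintype.card_fin, nsmul_eq_mul] at key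
    exact key
  -- combine
  have hItop : ∀ i ∈ S, (∫ ω, g {X i ω} ∂μ) ≤ testScore g P k i / ((1 - α) * (k i : ℝ)) := by
    intro i _
    rw [le_div_iff₀ (mul_pos hα (hkpos i))]
    calc (∫ ω, g {X i ω} ∂μ) * ((1 - α) * (k i : ℝ))
        = (1 - α) * ((k i : ℝ) * ∫ ω, g {X i ω} ∂μ) := by ring
      _ ≤ testScore g P k i := stepB i
  have hchain : utility μ g X S ≤ ∑ i ∈ S, testScore g P k i / ((1 - α) * (k i : ℝ)) :=
    stepA.trans (Finset.sum_le_sum hItop)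
  have hD : (0:ℝ) < ∑ i ∈ S, ((k i : ℝ))⁻¹ :=
    Finset.sum_pos (fun i _ => inv_pos.2 (hkpos i)) hS
  have hrhs : (relCost k S / (1 - α)) *
        ((∑ i ∈ S, testScore g P k i / (k i : ℝ)) / ∑ i ∈ S, ((k i : ℝ))⁻¹)
      = ∑ i ∈ S, testScore g P k i / ((1 - α) * (k i : ℝ)) := by
    have h1 : (∑ i ∈ S, ((k i : ℝ))⁻¹) / (1 - α) *
          ((∑ i ∈ S, testScore g P k i / (k i : ℝ)) / ∑ i ∈ S, ((k i : ℝ))⁻¹)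
        = (∑ i ∈ S, testScore g P k i / (k i : ℝ)) / (1 - α) := by
      rw [div_mul_div_comm, mul_comm ((∑ i ∈ S, ((k i : ℝ))⁻¹)), mul_div_mul_right _ _ hD.ne']
    rw [relCost, h1, Finset.sum_div]
    refine Finset.sum_congr rfl fun i _ => ?_
    rw [div_div, mul_comm]
  rw [hrhs]
  exact hchain
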